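/- For all n ≥ 0, I_n := ∫₀^∞ ∫₀^∞ ((1+x+y)(1+1/x+1/y))^{−n−1} dx dy/(xy) = (1/(4^{n−1} n!²)) ∫₀^∞ x^{2n+1} K₀(x)³ dx, where K₀ is the modified Bessel function of the second kind. -/

import Mathlib

open MeasureTheory Set Real
open scoped ENNReal

/-- The modified Bessel function of the second kind of order `0`, via
`K₀(m) = ∫₀^∞ e^{−m cosh u} du`. -/
noncomputable def besselK0 (m : ℝ) : ℝ :=
  ∫ u in Ioi (0 : ℝ), Real.exp (-m * Real.cosh u)

noncomputable def kap (m : ℝ) : ℝ≥0∞ :=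
  ∫⁻ u in Ioi (0 : ℝ), ENNReal.ofReal (Real.exp (-(m * Real.cosh u)))

lemma kap_meas : Measurable kap := by
  have h : Measurable (Function.uncurry fun m u : ℝ =>
      ENNReal.ofReal (Real.exp (-(m * Real.cosh u)))) := by
    apply Measurable.ennreal_ofReal
    fun_prop
  exact h.lintegral_prod_right'

lemma besselK0_eq (m : ℝ) : besselK0 m = (kap m).toReal := by
  rw [besselK0, integral_eq_lintegral_of_nonneg_ae
      (ae_of_all _ fun u => (Real.exp_pos _).le)
      (Continuous.aestronglyMeasurable (by fun_prop))]
  simp [kap, neg_mul]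

lemma kap_lt_top {m : ℝ} (hm : 0 < m) : kap m < ⊤ := by
  have hb : ∀ u : ℝ, Real.exp (-(m * Real.cosh u)) ≤
      Real.exp (-(m/2)) * Real.exp (-(m/2) * u) := by
    intro u
    rw [← Real.exp_add, Real.exp_le_exp]
    have h1 : u + 1 ≤ Real.exp u := Real.add_one_le_exp u
    have h2 : (u + 1) / 2 ≤ Real.cosh u := by
      rw [Real.cosh_eq]
      have := (Real.exp_pos (-u)).le
      linarith
    nlinarith
  calc kap m ≤ ∫⁻ u in Ioi (0:ℝ),
        ENNReal.ofReal (Real.exp (-(m/2)) * Real.exp (-(m/2) * u)) :=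
      lintegral_mono fun u => ENNReal.ofReal_le_ofReal (hb u)
    _ < ⊤ := by
      have : IntegrableOn (fun u : ℝ => Real.exp (-(m/2)) * Real.exp (-(m/2) * u))
          (Ioi (0:ℝ)) := (exp_neg_integrableOn_Ioi 0 (by linarith)).const_mul _
      exact this.setLIntegral_lt_top

lemma lint_image {s : Set ℝ} {f f' : ℝ → ℝ} (hs : MeasurableSet s)
    (hf' : ∀ x ∈ s, HasDerivWithinAt f (f' x) s x) (hf : InjOn f s) (g : ℝ → ℝ≥0∞) :
    ∫⁻ x in f '' s, g x = ∫⁻ x in s, ENNReal.ofReal |f' x| * g (f x) := by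
  simpa only [ContinuousLinearMap.det_toSpanSingleton] using
    MeasureTheory.lintegral_image_eq_lintegral_abs_det_fderiv_mul volume hs
      (fun x hx => (hf' x hx).hasFDerivWithinAt) hf g

lemma gamma_lint (n : ℕ) {a : ℝ} (ha : 0 < a) :
    ∫⁻ t in Ioi (0:ℝ), ENNReal.ofReal (t ^ n * Real.exp (-(a * t)))
      = ENNReal.ofReal ((n.factorial : ℝ) * (a ^ (n+1))⁻¹) := by
  have hint : IntegrableOn (fun t : ℝ => t ^ n * Real.exp (-(a * t))) (Ioi 0) := by
    have h := integrableOn_rpow_mul_exp_neg_mul_rpow (p := 1) (s := (n:ℝ)) (b := a)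
      (by exact_mod_cast lt_of_lt_of_le (by norm_num : (-1:ℝ) < 0) (Nat.cast_nonneg n)) one_pos ha
    apply h.congr_fun ?_ measurableSet_Ioi
    intro x hx
    simp [Real.rpow_natCast, Real.rpow_one, neg_mul]
  have hval : ∫ t in Ioi (0:ℝ), t ^ n * Real.exp (-(a*t))
      = (n.factorial : ℝ) * (a ^ (n+1))⁻¹ := by
    have h := Real.integral_rpow_mul_exp_neg_mul_Ioi (a := ((n:ℝ)+1)) (r := a)
      (by positivity) ha
    rw [show ((n:ℝ)+1) - 1 = (n:ℝ) by ring] at h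
    rw [show ∫ t in Ioi (0:ℝ), t ^ n * Real.exp (-(a*t))
        = ∫ t in Ioi (0:ℝ), t ^ ((n:ℝ)) * Real.exp (-(a*t)) from
      setIntegral_congr_fun measurableSet_Ioi
        (fun x hx => by rw [Real.rpow_natCast]), h,
      Real.Gamma_nat_eq_factorial,
      show ((n:ℝ)+1) = ((n+1 : ℕ) : ℝ) by push_cast; ring,
      Real.rpow_natCast]
    push_cast
    field_simp
    rw [← mul_pow, one_div, inv_mul_cancel₀ ha.ne', one_pow]
  rw [← ofReal_integral_eq_lintegral_ofReal hint ?_, hval]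
  · filter_upwards [ae_restrict_mem measurableSet_Ioi] with t ht
    exact mul_nonneg (pow_nonneg (le_of_lt ht) n) (Real.exp_pos _).le

lemma lint_even (m : ℝ) :
    ∫⁻ w : ℝ, ENNReal.ofReal (Real.exp (-(m * Real.cosh w))) = 2 * kap m := by
  set h : ℝ → ℝ≥0∞ := fun w => ENNReal.ofReal (Real.exp (-(m * Real.cosh w))) with hh
  have h1 : ∫⁻ w in Iio (0:ℝ), h w = kap m := by
    have himg : (fun w : ℝ => -w) '' (Ioi 0) = Iio 0 := by
      ext z; simp only [mem_image, mem_Ioi, mem_Iio]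
      constructor
      · rintro ⟨w, hw, rfl⟩; linarith
      · intro hz; exact ⟨-z, by linarith, by ring⟩
    rw [← himg, lint_image measurableSet_Ioi
      (fun x _ => (hasDerivAt_neg x).hasDerivWithinAt) (fun x _ y _ hxy => by
        simpa using hxy) h]
    simp [hh, kap, Real.cosh_neg]
  rw [← lintegral_add_compl h measurableSet_Ioi, compl_Ioi,
    show (volume : Measure ℝ).restrict (Iic 0) = volume.restrict (Iio 0) from
      (Measure.restrict_congr_set Iio_ae_eq_Iic).symm, h1]
  rw [two_mul]
  rfl

lemma lintK {a b : ℝ} (ha : 0 < a) (hb : 0 < b) :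
    ∫⁻ x in Ioi (0:ℝ), ENNReal.ofReal (Real.exp (-(a*x + b/x)) / x)
      = 2 * kap (2 * Real.sqrt (a*b)) := by
  set c := Real.sqrt b / Real.sqrt a with hc
  have hsa : (0:ℝ) < Real.sqrt a := Real.sqrt_pos.2 ha
  have hsb : (0:ℝ) < Real.sqrt b := Real.sqrt_pos.2 hb
  have hc0 : 0 < c := div_pos hsb hsa
  have himg : (fun w : ℝ => c * Real.exp w) '' univ = Ioi 0 := by
    rw [image_univ]
    ext z; simp only [mem_range, mem_Ioi]
    constructor
    · rintro ⟨w, rfl⟩; positivity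
    · intro hz
      exact ⟨Real.log (z / c), by
        rw [Real.exp_log (div_pos hz hc0)]; field_simp⟩
  have hder : ∀ w ∈ (univ : Set ℝ), HasDerivWithinAt (fun w => c * Real.exp w)
      (c * Real.exp w) univ w :=
    fun w _ => ((Real.hasDerivAt_exp w).const_mul c).hasDerivWithinAt
  have hinj : InjOn (fun w : ℝ => c * Real.exp w) univ := by
    intro w _ w' _ hw
    exact Real.exp_injective (mul_left_cancel₀ hc0.ne' hw)
  have key := lint_image MeasurableSet.univ hder hinj
    (fun x => ENNReal.ofReal (Real.exp (-(a*x + b/x)) / x))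
  rw [himg] at key
  rw [key, Measure.restrict_univ, ← lint_even]
  apply lintegral_congr
  intro w
  have hpos : 0 < c * Real.exp w := mul_pos hc0 (Real.exp_pos w)
  rw [abs_of_pos hpos, ← ENNReal.ofReal_mul hpos.le]
  congr 1
  rw [mul_comm (c * Real.exp w), div_mul_cancel₀ _ hpos.ne']
  congr 1
  have haa : Real.sqrt a * Real.sqrt a = a := Real.mul_self_sqrt ha.le
  have hbb : Real.sqrt b * Real.sqrt b = b := Real.mul_self_sqrt hb.le
  have h1 : a * (c * Real.exp w) = Real.sqrt (a*b) * Real.exp w := by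
    rw [Real.sqrt_mul ha.le, hc]
    field_simp
    linear_combination -haa
  have h2 : b / (c * Real.exp w) = Real.sqrt (a*b) * Real.exp (-w) := by
    have hee : Real.exp (-w) * Real.exp w = 1 := by
      rw [← Real.exp_add]; simp
    rw [div_eq_iff hpos.ne']
    calc b = Real.sqrt b * Real.sqrt b * ((Real.sqrt a / Real.sqrt a) *
          (Real.exp (-w) * Real.exp w)) := by
          rw [hee, div_self hsa.ne', mul_one, mul_one, hbb]
      _ = Real.sqrt (a*b) * Real.exp (-w) * (c * Real.exp w) := by
          rw [Real.sqrt_mul ha.le, hc]; ring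
  rw [h1, h2, Real.cosh_eq]
  ring

lemma subst_sq {u : ℝ} (hu : 0 < u) (g : ℝ → ℝ≥0∞) :
    ∫⁻ v in Ioi (0:ℝ), g v
      = ∫⁻ s in Ioi (0:ℝ), ENNReal.ofReal (s/(2*u)) * g (s^2/(4*u)) := by
  have himg : (fun s : ℝ => s^2/(4*u)) '' Ioi 0 = Ioi 0 := by
    ext z; simp only [mem_image, mem_Ioi]
    constructor
    · rintro ⟨s, hs, rfl⟩; positivity
    · intro hz
      refine ⟨Real.sqrt (4*u*z), by positivity, ?_⟩
      rw [Real.sq_sqrt (by positivity)]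
      field_simp
  have hder : ∀ s ∈ Ioi (0:ℝ), HasDerivWithinAt (fun s : ℝ => s^2/(4*u))
      (s/(2*u)) (Ioi 0) s := by
    intro s _
    have := (hasDerivAt_pow 2 s).div_const (4*u)
    refine this.hasDerivWithinAt.congr_deriv ?_
    field_simp
    ring
  have hinj : InjOn (fun s : ℝ => s^2/(4*u)) (Ioi 0) := by
    intro s hs t ht h
    simp only [mem_Ioi] at hs ht
    have h2 : s^2 = t^2 := by
      field_simp at h
      nlinarith [h]
    calc s = Real.sqrt (s^2) := (Real.sqrt_sq hs.le).symm
      _ = Real.sqrt (t^2) := by rw [h2]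
      _ = t := Real.sqrt_sq ht.le
  have key := lint_image measurableSet_Ioi hder hinj g
  rw [himg] at key
  rw [key]
  apply setLIntegral_congr_fun_ae measurableSet_Ioi
  apply ae_of_all
  intro s hs
  simp only [mem_Ioi] at hs
  rw [abs_of_pos (by positivity : (0:ℝ) < s/(2*u))]

lemma restrict_prod_Ioi : (volume : Measure (ℝ×ℝ)).restrict (Ioi (0:ℝ) ×ˢ Ioi (0:ℝ))
    = (volume.restrict (Ioi (0:ℝ))).prod (volume.restrict (Ioi (0:ℝ))) := by
  rw [Measure.volume_eq_prod, ← Measure.prod_restrict]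

lemma stepA (n : ℕ) {x y : ℝ} (hx : 0 < x) (hy : 0 < y) :
    ENNReal.ofReal (((((1+x+y)*(1+1/x+1/y))^(n+1) : ℝ))⁻¹ / (x*y))
      = (ENNReal.ofReal (n.factorial:ℝ))⁻¹ * (ENNReal.ofReal (n.factorial:ℝ))⁻¹ *
        ∫⁻ q in Ioi (0:ℝ) ×ˢ Ioi (0:ℝ),
          ENNReal.ofReal (q.1^n * q.2^n * Real.exp (-(q.1+q.2))) *
          ENNReal.ofReal (Real.exp (-(q.1*x + q.2/x)) / x) *
          ENNReal.ofReal (Real.exp (-(q.1*y + q.2/y)) / y) := by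
  have hQ : (0:ℝ) < 1+x+y := by linarith
  have hR : (0:ℝ) < 1+1/x+1/y := by positivity
  have hmeas : Measurable (fun q : ℝ×ℝ =>
      ENNReal.ofReal (q.1^n * q.2^n * Real.exp (-(q.1+q.2))) *
      ENNReal.ofReal (Real.exp (-(q.1*x + q.2/x)) / x) *
      ENNReal.ofReal (Real.exp (-(q.1*y + q.2/y)) / y)) := by fun_prop
  rw [restrict_prod_Ioi, lintegral_prod _ hmeas.aemeasurable]
  have hsep : ∀ u ∈ Ioi (0:ℝ), ∀ v ∈ Ioi (0:ℝ),
      ENNReal.ofReal (u^n * v^n * Real.exp (-(u+v))) *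
      ENNReal.ofReal (Real.exp (-(u*x + v/x)) / x) *
      ENNReal.ofReal (Real.exp (-(u*y + v/y)) / y)
      = ENNReal.ofReal (u^n * Real.exp (-((1+x+y)*u))) *
        (ENNReal.ofReal (v^n * Real.exp (-((1+1/x+1/y)*v))) *
          ENNReal.ofReal ((x*y)⁻¹)) := by
    intro u hu v hv
    simp only [mem_Ioi] at hu hv
    rw [← ENNReal.ofReal_mul (by positivity), ← ENNReal.ofReal_mul (by positivity),
      ← ENNReal.ofReal_mul (by positivity), ← ENNReal.ofReal_mul (by positivity)]
    congr 1
    have hE : Real.exp (-(u+v)) * Real.exp (-(u*x+v/x)) * Real.exp (-(u*y+v/y))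
        = Real.exp (-((1+x+y)*u)) * Real.exp (-((1+1/x+1/y)*v)) := by
      rw [← Real.exp_add, ← Real.exp_add, ← Real.exp_add]
      congr 1
      field_simp
      ring
    linear_combination (u^n*v^n/(x*y)) * hE
  have hinner : ∀ u ∈ Ioi (0:ℝ),
      (∫⁻ v in Ioi (0:ℝ),
        ENNReal.ofReal (u^n * v^n * Real.exp (-(u+v))) *
        ENNReal.ofReal (Real.exp (-(u*x + v/x)) / x) *
        ENNReal.ofReal (Real.exp (-(u*y + v/y)) / y))
      = ENNReal.ofReal (u^n * Real.exp (-((1+x+y)*u))) *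
        (ENNReal.ofReal ((n.factorial:ℝ) * (((1+1/x+1/y))^(n+1))⁻¹) *
          ENNReal.ofReal ((x*y)⁻¹)) := by
    intro u hu
    rw [setLIntegral_congr_fun_ae measurableSet_Ioi (ae_of_all _ (hsep u hu)),
      lintegral_const_mul' _ _ ENNReal.ofReal_ne_top,
      lintegral_mul_const' _ _ ENNReal.ofReal_ne_top, gamma_lint n hR]
  rw [setLIntegral_congr_fun_ae measurableSet_Ioi (ae_of_all _ hinner),
    lintegral_mul_const' _ _ (by finiteness), gamma_lint n hQ]
  have hfac : (ENNReal.ofReal (n.factorial:ℝ))⁻¹ * ENNReal.ofReal (n.factorial:ℝ) = 1 :=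
    ENNReal.inv_mul_cancel
      (ENNReal.ofReal_pos.2 (by exact_mod_cast n.factorial_pos)).ne' ENNReal.ofReal_ne_top
  rw [ENNReal.ofReal_mul (by positivity), ENNReal.ofReal_mul (by positivity)]
  calc ENNReal.ofReal (((((1+x+y)*(1+1/x+1/y))^(n+1) : ℝ))⁻¹ / (x*y))
      = ENNReal.ofReal ((((1+x+y))^(n+1))⁻¹ * (((1+1/x+1/y))^(n+1))⁻¹ * (x*y)⁻¹) := by
        congr 1
        rw [mul_pow, mul_inv]
        ring
    _ = ENNReal.ofReal ((((1+x+y))^(n+1))⁻¹) *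
          ENNReal.ofReal ((((1+1/x+1/y))^(n+1))⁻¹) * ENNReal.ofReal ((x*y)⁻¹) := by
        rw [ENNReal.ofReal_mul (by positivity), ENNReal.ofReal_mul (by positivity)]
    _ = ((ENNReal.ofReal (n.factorial:ℝ))⁻¹ * ENNReal.ofReal (n.factorial:ℝ)) *
        (((ENNReal.ofReal (n.factorial:ℝ))⁻¹ * ENNReal.ofReal (n.factorial:ℝ)) *
        (ENNReal.ofReal ((((1+x+y))^(n+1))⁻¹) *
          (ENNReal.ofReal ((((1+1/x+1/y))^(n+1))⁻¹) * ENNReal.ofReal ((x*y)⁻¹)))) := by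
        rw [hfac]; ring
    _ = (ENNReal.ofReal (n.factorial:ℝ))⁻¹ * (ENNReal.ofReal (n.factorial:ℝ))⁻¹ *
        (ENNReal.ofReal (n.factorial:ℝ) * ENNReal.ofReal ((((1+x+y))^(n+1))⁻¹) *
        (ENNReal.ofReal (n.factorial:ℝ) * ENNReal.ofReal ((((1+1/x+1/y))^(n+1))⁻¹) *
          ENNReal.ofReal ((x*y)⁻¹))) := by ring

lemma stepC (n : ℕ) {u v : ℝ} (hu : 0 < u) (hv : 0 < v) :
    ∫⁻ p in Ioi (0:ℝ) ×ˢ Ioi (0:ℝ),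
        ENNReal.ofReal (u^n * v^n * Real.exp (-(u+v))) *
        ENNReal.ofReal (Real.exp (-(u*p.1 + v/p.1)) / p.1) *
        ENNReal.ofReal (Real.exp (-(u*p.2 + v/p.2)) / p.2)
      = ENNReal.ofReal (u^n * v^n * Real.exp (-(u+v))) *
          (2 * kap (2*Real.sqrt (u*v)))^2 := by
  have hK : (2 * kap (2*Real.sqrt (u*v))) ≠ ⊤ :=
    ENNReal.mul_ne_top (by simp) (kap_lt_top (by positivity)).ne
  have hmeas : Measurable (fun p : ℝ×ℝ =>
      ENNReal.ofReal (u^n * v^n * Real.exp (-(u+v))) *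
      ENNReal.ofReal (Real.exp (-(u*p.1 + v/p.1)) / p.1) *
      ENNReal.ofReal (Real.exp (-(u*p.2 + v/p.2)) / p.2)) := by fun_prop
  rw [restrict_prod_Ioi, lintegral_prod _ hmeas.aemeasurable]
  have hxint : ∀ x : ℝ,
      (∫⁻ y in Ioi (0:ℝ),
        ENNReal.ofReal (u^n * v^n * Real.exp (-(u+v))) *
        ENNReal.ofReal (Real.exp (-(u*x + v/x)) / x) *
        ENNReal.ofReal (Real.exp (-(u*y + v/y)) / y))
      = (ENNReal.ofReal (u^n * v^n * Real.exp (-(u+v))) *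
          (2 * kap (2*Real.sqrt (u*v)))) *
        ENNReal.ofReal (Real.exp (-(u*x + v/x)) / x) := by
    intro x
    rw [lintegral_const_mul' _ _
      (ENNReal.mul_ne_top ENNReal.ofReal_ne_top ENNReal.ofReal_ne_top), lintK hu hv]
    ring
  simp only [hxint]
  rw [lintegral_const_mul' _ _
    (ENNReal.mul_ne_top ENNReal.ofReal_ne_top hK), lintK hu hv]
  ring

lemma stepD (n : ℕ) {u : ℝ} (hu : 0 < u) :
    ∫⁻ v in Ioi (0:ℝ), ENNReal.ofReal (u^n * v^n * Real.exp (-(u+v))) *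
        (2 * kap (2*Real.sqrt (u*v)))^2
      = ∫⁻ s in Ioi (0:ℝ),
          (ENNReal.ofReal (s^(2*n+1) * ((2*(4:ℝ)^n))⁻¹) * (2*kap s)^2) *
            ENNReal.ofReal (Real.exp (-(1*u + (s^2/4)/u)) / u) := by
  rw [subst_sq hu (fun v => ENNReal.ofReal (u^n * v^n * Real.exp (-(u+v))) *
        (2 * kap (2*Real.sqrt (u*v)))^2)]
  apply setLIntegral_congr_fun_ae measurableSet_Ioi (ae_of_all _ ?_)
  intro s hs
  simp only [mem_Ioi] at hs
  have harg : 2*Real.sqrt (u*(s^2/(4*u))) = s := by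
    rw [show u*(s^2/(4*u)) = (s/2)^2 by field_simp; ring,
      Real.sqrt_sq (by positivity)]
    ring
  rw [harg]
  have hreal : (s/(2*u)) * (u^n*(s^2/(4*u))^n*Real.exp (-(u+s^2/(4*u))))
      = (s^(2*n+1) * ((2*(4:ℝ)^n))⁻¹) * (Real.exp (-(1*u+(s^2/4)/u))/u) := by
    rw [show -(u+s^2/(4*u)) = -(1*u+(s^2/4)/u) by field_simp]
    field_simp
    ring
    have : u^n * u⁻¹^n * (1/4:ℝ)^n * 4^n = (1:ℝ) := by
      rw [← mul_pow, ← mul_pow, ← mul_pow, mul_inv_cancel₀ hu.ne']; norm_num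
    linear_combination (s * s^(n*2)) * this
  calc ENNReal.ofReal (s/(2*u)) *
        (ENNReal.ofReal (u^n*(s^2/(4*u))^n*Real.exp (-(u+s^2/(4*u)))) * (2*kap s)^2)
      = (ENNReal.ofReal (s/(2*u)) *
          ENNReal.ofReal (u^n*(s^2/(4*u))^n*Real.exp (-(u+s^2/(4*u))))) * (2*kap s)^2 := by
        ring
    _ = ENNReal.ofReal ((s^(2*n+1) * ((2*(4:ℝ)^n))⁻¹) *
          (Real.exp (-(1*u+(s^2/4)/u))/u)) * (2*kap s)^2 := by
        rw [← ENNReal.ofReal_mul (by positivity), hreal]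
    _ = (ENNReal.ofReal (s^(2*n+1) * ((2*(4:ℝ)^n))⁻¹) * (2*kap s)^2) *
          ENNReal.ofReal (Real.exp (-(1*u + (s^2/4)/u)) / u) := by
        rw [ENNReal.ofReal_mul (by positivity)]
        ring

lemma stepE (n : ℕ) {s : ℝ} (hs : 0 < s) :
    ∫⁻ u in Ioi (0:ℝ), (ENNReal.ofReal (s^(2*n+1) * ((2*(4:ℝ)^n))⁻¹) * (2*kap s)^2) *
        ENNReal.ofReal (Real.exp (-(1*u + (s^2/4)/u)) / u)
      = ENNReal.ofReal (s^(2*n+1)) * kap s^3 *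
          (ENNReal.ofReal (((2*(4:ℝ)^n))⁻¹) * 8) := by
  have hk : kap s ≠ ⊤ := (kap_lt_top hs).ne
  rw [lintegral_const_mul' _ _ (ENNReal.mul_ne_top ENNReal.ofReal_ne_top
      (ENNReal.pow_ne_top (ENNReal.mul_ne_top (by simp) hk))),
    lintK one_pos (by positivity : (0:ℝ) < s^2/4)]
  have harg : 2*Real.sqrt (1*(s^2/4)) = s := by
    rw [one_mul, show s^2/4 = (s/2)^2 by ring, Real.sqrt_sq (by positivity)]
    ring
  rw [harg, ENNReal.ofReal_mul (by positivity)]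
  ring

theorem sunsetMoment_eq_bessel_moment (n : ℕ) :
    ∫ p in (Ioi (0 : ℝ) ×ˢ Ioi (0 : ℝ)),
        ((1 + p.1 + p.2) * (1 + 1/p.1 + 1/p.2)) ^ (-(n : ℤ) - 1) / (p.1 * p.2)
      = (1 / ((4 : ℝ) ^ ((n : ℤ) - 1) * (n.factorial : ℝ) ^ 2)) *
          ∫ x in Ioi (0 : ℝ), x ^ (2 * n + 1) * besselK0 x ^ 3 := by
  classical
  set cn : ℝ≥0∞ := (ENNReal.ofReal (n.factorial:ℝ))⁻¹ with hcn
  have hfacpos : (0:ℝ) < (n.factorial : ℝ) := by exact_mod_cast n.factorial_pos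
  have hcn_ne : cn ≠ ⊤ :=
    ENNReal.inv_ne_top.2 (ENNReal.ofReal_pos.2 hfacpos).ne'
  set J : ℝ≥0∞ := ∫⁻ s in Ioi (0:ℝ), ENNReal.ofReal (s^(2*n+1)) * kap s^3 with hJdef
  set c8 : ℝ≥0∞ := ENNReal.ofReal (((2*(4:ℝ)^n))⁻¹) * 8 with hc8
  have hbKm : Measurable besselK0 := by
    have h : besselK0 = fun m => (kap m).toReal := funext besselK0_eq
    rw [h]
    exact kap_meas.ennreal_toReal
  have hRHS : ∫ x in Ioi (0:ℝ), x ^ (2*n+1) * besselK0 x ^ 3 = J.toReal := by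
    rw [integral_eq_lintegral_of_nonneg_ae]
    · rw [hJdef]
      congr 1
      apply setLIntegral_congr_fun_ae measurableSet_Ioi (ae_of_all _ ?_)
      intro x hx
      simp only [mem_Ioi] at hx
      rw [ENNReal.ofReal_mul (by positivity), besselK0_eq,
        ENNReal.ofReal_pow ENNReal.toReal_nonneg,
        ENNReal.ofReal_toReal (kap_lt_top hx).ne]
    · refine (ae_restrict_iff' measurableSet_Ioi).2 (ae_of_all _ fun x hx => ?_)
      simp only [mem_Ioi] at hx
      have h1 : 0 ≤ besselK0 x := by
        rw [besselK0_eq]; exact ENNReal.toReal_nonneg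
      positivity
    · exact ((measurable_id.pow_const (2*n+1)).mul
        (hbKm.pow_const 3)).aestronglyMeasurable
  have hzpow : ∀ B : ℝ, B ^ (-(n:ℤ)-1) = ((B^(n+1) : ℝ))⁻¹ := fun B => by
    rw [show -(n:ℤ)-1 = -((n+1:ℕ):ℤ) by push_cast; ring, zpow_neg, zpow_natCast]
  simp only [hzpow]
  have hLm : Measurable (fun p : ℝ×ℝ =>
      ((((1+p.1+p.2)*(1+1/p.1+1/p.2))^(n+1) : ℝ))⁻¹ / (p.1*p.2)) := by fun_prop
  rw [integral_eq_lintegral_of_nonneg_ae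
      ((ae_restrict_iff' (measurableSet_Ioi.prod measurableSet_Ioi)).2
        (ae_of_all _ fun p hp => by
          have h1 : 0 < p.1 := hp.1
          have h2 : 0 < p.2 := hp.2
          positivity))
      hLm.aestronglyMeasurable]
  have hΦm : Measurable (fun z : (ℝ×ℝ)×(ℝ×ℝ) =>
      ENNReal.ofReal (z.2.1^n * z.2.2^n * Real.exp (-(z.2.1+z.2.2))) *
      ENNReal.ofReal (Real.exp (-(z.2.1*z.1.1 + z.2.2/z.1.1)) / z.1.1) *
      ENNReal.ofReal (Real.exp (-(z.2.1*z.1.2 + z.2.2/z.1.2)) / z.1.2)) := by fun_prop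
  have hΦm' : Measurable (fun z : (ℝ×ℝ)×(ℝ×ℝ) =>
      ENNReal.ofReal (z.1.1^n * z.1.2^n * Real.exp (-(z.1.1+z.1.2))) *
      ENNReal.ofReal (Real.exp (-(z.1.1*z.2.1 + z.1.2/z.2.1)) / z.2.1) *
      ENNReal.ofReal (Real.exp (-(z.1.1*z.2.2 + z.1.2/z.2.2)) / z.2.2)) := by fun_prop
  set μ : Measure ℝ := volume.restrict (Ioi (0:ℝ)) with hμ
  have hFpm : Measurable (fun p : ℝ×ℝ => ∫⁻ q in Ioi (0:ℝ) ×ˢ Ioi (0:ℝ),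
      ENNReal.ofReal (q.1^n * q.2^n * Real.exp (-(q.1+q.2))) *
      ENNReal.ofReal (Real.exp (-(q.1*p.1 + q.2/p.1)) / p.1) *
      ENNReal.ofReal (Real.exp (-(q.1*p.2 + q.2/p.2)) / p.2)) := by
    simp only [restrict_prod_Ioi]
    exact hΦm.lintegral_prod_right'
  have hGqm : Measurable (fun q : ℝ×ℝ => ∫⁻ p : ℝ×ℝ,
      (ENNReal.ofReal (q.1^n * q.2^n * Real.exp (-(q.1+q.2))) *
      ENNReal.ofReal (Real.exp (-(q.1*p.1 + q.2/p.1)) / p.1) *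
      ENNReal.ofReal (Real.exp (-(q.1*p.2 + q.2/p.2)) / p.2)) ∂(μ.prod μ)) :=
    Measurable.lintegral_prod_right' hΦm'
  have hψm : Measurable (fun z : ℝ×ℝ =>
      (ENNReal.ofReal (z.2^(2*n+1) * ((2*(4:ℝ)^n))⁻¹) * (2*kap z.2)^2) *
        ENNReal.ofReal (Real.exp (-(1*z.1 + (z.2^2/4)/z.1)) / z.1)) := by
    apply Measurable.mul
    · apply Measurable.mul
      · apply Measurable.ennreal_ofReal; fun_prop
      · exact ((kap_meas.comp measurable_snd).const_mul 2).pow_const 2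
    · apply Measurable.ennreal_ofReal; fun_prop
  have keyL : (∫⁻ p in Ioi (0:ℝ) ×ˢ Ioi (0:ℝ),
      ENNReal.ofReal (((((1+p.1+p.2)*(1+1/p.1+1/p.2))^(n+1) : ℝ))⁻¹ / (p.1*p.2)))
      = cn * cn * (J * c8) := by
    calc (∫⁻ p in Ioi (0:ℝ) ×ˢ Ioi (0:ℝ),
        ENNReal.ofReal (((((1+p.1+p.2)*(1+1/p.1+1/p.2))^(n+1) : ℝ))⁻¹ / (p.1*p.2)))
        = ∫⁻ x, (∫⁻ y,
            ENNReal.ofReal (((((1+x+y)*(1+1/x+1/y))^(n+1) : ℝ))⁻¹ / (x*y)) ∂μ) ∂μ := by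
          rw [restrict_prod_Ioi, lintegral_prod _ hLm.ennreal_ofReal.aemeasurable]
      _ = ∫⁻ x, (∫⁻ y, ((cn * cn) *
            ∫⁻ q in Ioi (0:ℝ) ×ˢ Ioi (0:ℝ),
              ENNReal.ofReal (q.1^n * q.2^n * Real.exp (-(q.1+q.2))) *
              ENNReal.ofReal (Real.exp (-(q.1*x + q.2/x)) / x) *
              ENNReal.ofReal (Real.exp (-(q.1*y + q.2/y)) / y)) ∂μ) ∂μ := by
          apply setLIntegral_congr_fun_ae measurableSet_Ioi (ae_of_all _ ?_)
          intro x hx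
          apply setLIntegral_congr_fun_ae measurableSet_Ioi (ae_of_all _ ?_)
          intro y hy
          exact stepA n hx hy
      _ = (cn * cn) * ∫⁻ p : ℝ×ℝ, (∫⁻ q : ℝ×ℝ,
            (ENNReal.ofReal (q.1^n * q.2^n * Real.exp (-(q.1+q.2))) *
            ENNReal.ofReal (Real.exp (-(q.1*p.1 + q.2/p.1)) / p.1) *
            ENNReal.ofReal (Real.exp (-(q.1*p.2 + q.2/p.2)) / p.2)) ∂(μ.prod μ))
              ∂(μ.prod μ) := by
          rw [lintegral_congr (fun x => lintegral_const_mul' (cn*cn) _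
              (ENNReal.mul_ne_top hcn_ne hcn_ne)),
            lintegral_const_mul' (cn*cn) _ (ENNReal.mul_ne_top hcn_ne hcn_ne)]
          congr 1
          rw [← lintegral_prod _ hFpm.aemeasurable]
          simp only [restrict_prod_Ioi]
          rfl
      _ = (cn * cn) * ∫⁻ q : ℝ×ℝ, (∫⁻ p : ℝ×ℝ,
            (ENNReal.ofReal (q.1^n * q.2^n * Real.exp (-(q.1+q.2))) *
            ENNReal.ofReal (Real.exp (-(q.1*p.1 + q.2/p.1)) / p.1) *
            ENNReal.ofReal (Real.exp (-(q.1*p.2 + q.2/p.2)) / p.2)) ∂(μ.prod μ))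
              ∂(μ.prod μ) := by
          congr 1
          exact lintegral_lintegral_swap hΦm.aemeasurable
      _ = (cn * cn) * ∫⁻ u, (∫⁻ v, (∫⁻ p : ℝ×ℝ,
            (ENNReal.ofReal (u^n * v^n * Real.exp (-(u+v))) *
            ENNReal.ofReal (Real.exp (-(u*p.1 + v/p.1)) / p.1) *
            ENNReal.ofReal (Real.exp (-(u*p.2 + v/p.2)) / p.2)) ∂(μ.prod μ)) ∂μ) ∂μ := by
          congr 1
          exact lintegral_prod _ hGqm.aemeasurable
      _ = (cn * cn) * ∫⁻ u, (∫⁻ s,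
            ((ENNReal.ofReal (s^(2*n+1) * ((2*(4:ℝ)^n))⁻¹) * (2*kap s)^2) *
              ENNReal.ofReal (Real.exp (-(1*u + (s^2/4)/u)) / u)) ∂μ) ∂μ := by
          congr 1
          apply setLIntegral_congr_fun_ae measurableSet_Ioi (ae_of_all _ ?_)
          intro u hu
          simp only [mem_Ioi] at hu
          have h1 : (∫⁻ v, (∫⁻ p : ℝ×ℝ,
              (ENNReal.ofReal (u^n * v^n * Real.exp (-(u+v))) *
              ENNReal.ofReal (Real.exp (-(u*p.1 + v/p.1)) / p.1) *
              ENNReal.ofReal (Real.exp (-(u*p.2 + v/p.2)) / p.2)) ∂(μ.prod μ)) ∂μ)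
              = ∫⁻ v in Ioi (0:ℝ), ENNReal.ofReal (u^n * v^n * Real.exp (-(u+v))) *
                  (2 * kap (2*Real.sqrt (u*v)))^2 := by
            apply setLIntegral_congr_fun_ae measurableSet_Ioi (ae_of_all _ ?_)
            intro v hv
            simp only [mem_Ioi] at hv
            rw [← restrict_prod_Ioi]
            exact stepC n hu hv
          rw [h1, stepD n hu]
      _ = (cn * cn) * ∫⁻ s, (∫⁻ u,
            ((ENNReal.ofReal (s^(2*n+1) * ((2*(4:ℝ)^n))⁻¹) * (2*kap s)^2) *
              ENNReal.ofReal (Real.exp (-(1*u + (s^2/4)/u)) / u)) ∂μ) ∂μ := by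
          congr 1
          exact lintegral_lintegral_swap (f := fun u s =>
            (ENNReal.ofReal (s^(2*n+1) * ((2*(4:ℝ)^n))⁻¹) * (2*kap s)^2) *
              ENNReal.ofReal (Real.exp (-(1*u + (s^2/4)/u)) / u))
            hψm.aemeasurable
      _ = (cn * cn) * ∫⁻ s,
            (ENNReal.ofReal (s^(2*n+1)) * kap s^3 *
              (ENNReal.ofReal (((2*(4:ℝ)^n))⁻¹) * 8)) ∂μ := by
          congr 1
          apply setLIntegral_congr_fun_ae measurableSet_Ioi (ae_of_all _ ?_)
          intro s hs
          simp only [mem_Ioi] at hs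
          exact stepE n hs
      _ = cn * cn * (J * c8) := by
          rw [lintegral_mul_const' _ _ (ENNReal.mul_ne_top ENNReal.ofReal_ne_top
            (by simp)), hJdef, hc8]
  rw [keyL, hRHS]
  rw [ENNReal.toReal_mul, ENNReal.toReal_mul, ENNReal.toReal_mul, hcn, hc8,
    ENNReal.toReal_inv, ENNReal.toReal_ofReal hfacpos.le, ENNReal.toReal_mul,
    ENNReal.toReal_ofReal (by positivity)]
  have h8 : ((8:ℝ≥0∞)).toReal = (8:ℝ) := by norm_num
  rw [h8, zpow_sub₀ (by norm_num : (4:ℝ) ≠ 0), zpow_natCast, zpow_one]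
  have h4 : ((4:ℝ)^n) ≠ 0 := by positivity
  have hf0 : (n.factorial : ℝ) ≠ 0 := hfacpos.ne'
  field_simp
  ring
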